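/- Over a finite field 𝔽_q with q odd, the number of symmetric n×n matrices of odd rank r = 2s+1 over 𝔽_q equals Π_{i=1}^{s} q^{2i}/(q^{2i}−1) · Π_{i=0}^{2s} (q^{n−i} − 1). -/

import Mathlib

open Matrix

set_option linter.unusedSectionVars false

namespace CountSymm

variable {F : Type} [Field F] [Fintype F] [DecidableEq F]

local notation "q" => Fintype.card F

lemma nat_card_sigma {ι : Type*} [Fintype ι] (f : ι → Type*) [∀ i, Finite (f i)] :
    Nat.card (Σ i, f i) = ∑ i, Nat.card (f i) := by
  classical
  letI : ∀ i, Fintype (f i) := fun i => Fintype.ofFinite _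
  simp [Nat.card_eq_fintype_card]

lemma nat_card_subtype_split {α : Type*} [Finite α] (p r : α → Prop) :
    Nat.card {x : α // p x} =
      Nat.card {x : α // p x ∧ r x} + Nat.card {x : α // p x ∧ ¬ r x} := by
  classical
  rw [← Nat.card_congr (Equiv.sumCompl (fun x : {y : α // p y} => r x.1)), Nat.card_sum]
  congr 1
  · exact Nat.card_congr (Equiv.subtypeSubtypeEquivSubtypeInter p r)
  · exact Nat.card_congr (Equiv.subtypeSubtypeEquivSubtypeInter p (fun x => ¬ r x))

lemma card_symm_unit_congr {ι κ : Type} [Fintype ι] [DecidableEq ι] [Fintype κ] [DecidableEq κ]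
    (e : ι ≃ κ) :
    Nat.card {A : Matrix ι ι F // A.IsSymm ∧ IsUnit A} =
      Nat.card {A : Matrix κ κ F // A.IsSymm ∧ IsUnit A} := by
  apply Nat.card_congr
  refine Equiv.subtypeEquiv (Matrix.reindex e e) fun A => ?_
  rw [Matrix.IsSymm, Matrix.IsSymm, transpose_reindex,
    (Matrix.reindex e e).apply_eq_iff_eq]
  simp only [Matrix.isUnit_iff_isUnit_det, det_reindex_self]

/-- 1×1 matrix with given entry. -/
def oneM (x : F) : Matrix (Fin 1) (Fin 1) F := Matrix.of fun _ _ => x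

@[simp] lemma oneM_apply (x : F) (i j : Fin 1) : oneM x i j = x := rfl

@[simp] lemma oneM_mul (x y : F) : oneM x * oneM (y : F) = oneM (x * y) := by
  ext i j
  simp [oneM, mul_apply]

@[simp] lemma oneM_add (x y : F) : oneM x + oneM y = oneM (x + y) := by
  ext i j; simp [oneM]

@[simp] lemma oneM_transpose (x : F) : (oneM x)ᵀ = oneM x := by
  ext i j; simp [oneM]

@[simp] lemma oneM_one : (oneM (1 : F)) = 1 := by
  ext i j; simp [oneM, Matrix.one_apply, Subsingleton.elim i j]

@[simp] lemma oneM_zero : (oneM (0 : F)) = 0 := by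
  ext i j; simp [oneM]

/-- row matrix -/
def rowM {ι : Type} (u : ι → F) : Matrix (Fin 1) ι F := Matrix.of fun _ j => u j
/-- column matrix -/
def colM {ι : Type} (u : ι → F) : Matrix ι (Fin 1) F := Matrix.of fun i _ => u i

@[simp] lemma rowM_apply {ι : Type} (u : ι → F) (i : Fin 1) (j : ι) : rowM u i j = u j := rfl
@[simp] lemma colM_apply {ι : Type} (u : ι → F) (j : ι) (i : Fin 1) : colM u j i = u j := rfl

@[simp] lemma rowM_transpose {ι : Type} (u : ι → F) : (rowM u)ᵀ = colM u := rfl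
@[simp] lemma colM_transpose {ι : Type} (u : ι → F) : (colM u)ᵀ = rowM u := rfl

lemma colM_mul_rowM {ι κ : Type} [Fintype ι] [Fintype κ] (u : ι → F) (v : κ → F) (x : F) :
    colM u * oneM x * rowM v = x • vecMulVec u v := by
  ext i j
  simp [colM, rowM, oneM, mul_apply, vecMulVec_apply]
  ring

section Pivot

variable {ι : Type} [Fintype ι] [DecidableEq ι]

/-- the bordered matrix -/
def blk (a : F) (u : ι → F) (D : Matrix ι ι F) : Matrix (Fin 1 ⊕ ι) (Fin 1 ⊕ ι) F :=
  fromBlocks (oneM a) (rowM u) (colM u) D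

lemma blk_isSymm_iff (a : F) (u : ι → F) (D : Matrix ι ι F) :
    (blk a u D).IsSymm ↔ D.IsSymm := by
  constructor
  · intro h
    have := congrArg Matrix.toBlocks₂₂ h
    exact (show Dᵀ = D by simpa [blk, fromBlocks_transpose, toBlocks_fromBlocks₂₂] using this)
  · intro h
    rw [Matrix.IsSymm, blk, fromBlocks_transpose]
    simp [h.eq]

def invertible_oneM (a : F) (ha : a ≠ 0) : Invertible (oneM a) :=
  ⟨oneM a⁻¹, by simp [inv_mul_cancel₀ ha], by simp [mul_inv_cancel₀ ha]⟩

lemma blk_isUnit_iff (a : F) (ha : a ≠ 0) (u : ι → F) (D : Matrix ι ι F) :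
    IsUnit (blk a u D) ↔ IsUnit (D - a⁻¹ • vecMulVec u u) := by
  letI := invertible_oneM a ha
  rw [blk, isUnit_fromBlocks_iff_of_invertible₁₁]
  have h1 : ⅟ (oneM a) = oneM a⁻¹ := by
    apply invOf_eq_right_inv
    simp [mul_inv_cancel₀ ha]
  rw [h1, colM_mul_rowM]

/-- the matrix determines its pieces -/
lemma blk_ext {A : Matrix (Fin 1 ⊕ ι) (Fin 1 ⊕ ι) F} (h : A.IsSymm) :
    blk (A (Sum.inl 0) (Sum.inl 0)) (fun j => A (Sum.inl 0) (Sum.inr j)) (A.toBlocks₂₂) = A := by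
  ext i j
  rcases i with i | i <;> rcases j with j | j
  · have hi : i = 0 := Subsingleton.elim _ _
    have hj : j = 0 := Subsingleton.elim _ _
    subst hi hj; rfl
  · have hi : i = 0 := Subsingleton.elim _ _
    subst hi; rfl
  · have hj : j = 0 := Subsingleton.elim _ _
    subst hj
    show A (Sum.inl 0) (Sum.inr i) = A (Sum.inr i) (Sum.inl 0)
    have := h.apply (Sum.inr i) (Sum.inl 0)
    first
      | exact this
      | exact this.symm
  · rfl

end Pivot
section Pivot2

variable {ι : Type} [Fintype ι] [DecidableEq ι]

lemma vecMulVec_isSymm (u : ι → F) : (vecMulVec u u).IsSymm := by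
  ext i j; simp [vecMulVec_apply, mul_comm]

/-- Count of symmetric invertible matrices with nonzero pivot. -/
lemma card_pivot_ne :
    Nat.card {A : Matrix (Fin 1 ⊕ ι) (Fin 1 ⊕ ι) F //
        (A.IsSymm ∧ IsUnit A) ∧ A (Sum.inl 0) (Sum.inl 0) ≠ 0}
      = (q - 1) * q ^ Fintype.card ι *
        Nat.card {C : Matrix ι ι F // C.IsSymm ∧ IsUnit C} := by
  have e : {A : Matrix (Fin 1 ⊕ ι) (Fin 1 ⊕ ι) F //
        (A.IsSymm ∧ IsUnit A) ∧ A (Sum.inl 0) (Sum.inl 0) ≠ 0}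
      ≃ {a : F // a ≠ 0} × (ι → F) × {C : Matrix ι ι F // C.IsSymm ∧ IsUnit C} := by
    refine
      { toFun := fun A =>
          ⟨⟨A.1 (Sum.inl 0) (Sum.inl 0), A.2.2⟩,
            fun j => A.1 (Sum.inl 0) (Sum.inr j),
            ⟨A.1.toBlocks₂₂ - (A.1 (Sum.inl 0) (Sum.inl 0))⁻¹ •
              vecMulVec (fun j => A.1 (Sum.inl 0) (Sum.inr j))
                (fun j => A.1 (Sum.inl 0) (Sum.inr j)), ?_, ?_⟩⟩
        invFun := fun x =>
          ⟨blk x.1.1 x.2.1 (x.2.2.1 + (x.1.1)⁻¹ • vecMulVec x.2.1 x.2.1), ⟨?_, ?_⟩, ?_⟩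
        left_inv := ?_
        right_inv := ?_ }
    · -- C symm
      obtain ⟨⟨hs, hu⟩, hne⟩ := A.2
      have h22 : (A.1.toBlocks₂₂).IsSymm := by
        ext i j
        show A.1.toBlocks₂₂ j i = A.1.toBlocks₂₂ i j
        exact hs.apply _ _
      exact Matrix.IsSymm.sub h22 ((vecMulVec_isSymm _).smul _)
    · -- C unit
      obtain ⟨⟨hs, hu⟩, hne⟩ := A.2
      rw [← blk_ext hs] at hu
      exact (blk_isUnit_iff _ hne _ _).mp hu
    · -- symm of blk
      rw [blk_isSymm_iff]
      exact Matrix.IsSymm.add x.2.2.2.1 ((vecMulVec_isSymm _).smul _)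
    · -- unit of blk
      rw [blk_isUnit_iff _ x.1.2]
      simpa using x.2.2.2.2
    · -- entry ne
      exact x.1.2
    · -- left_inv
      rintro ⟨A, ⟨hs, hu⟩, hne⟩
      apply Subtype.ext
      show blk _ _ _ = A
      rw [sub_add_cancel]
      exact blk_ext hs
    · -- right_inv
      rintro ⟨⟨a, ha⟩, u, ⟨C, hC⟩⟩
      refine Prod.ext (Subtype.ext rfl) (Prod.ext rfl (Subtype.ext ?_))
      show C + a⁻¹ • vecMulVec u u - a⁻¹ • vecMulVec u u = C
      rw [add_sub_cancel_right]
  rw [Nat.card_congr e, Nat.card_prod, Nat.card_prod]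
  have h1 : Nat.card {a : F // a ≠ 0} = q - 1 := by
    rw [Nat.card_eq_fintype_card]
    have : Fintype.card {a : F // ¬ a = 0} = q - Fintype.card {a : F // a = 0} :=
      Fintype.card_subtype_compl _
    simpa [Fintype.card_subtype_eq] using this
  have h2 : Nat.card (ι → F) = q ^ Fintype.card ι := by
    simp [Nat.card_eq_fintype_card]
  rw [h1, h2, mul_assoc]

end Pivot2
section PivotZero

variable {ι : Type} [Fintype ι] [DecidableEq ι]

/-- matrices bordered by `u` with zero corner, giving an invertible symmetric matrix -/
def fib (u : ι → F) : Type :=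
  {B : Matrix ι ι F // B.IsSymm ∧ IsUnit (blk 0 u B)}

instance (u : ι → F) : Finite (fib (F := F) u) := by
  unfold fib; infer_instance

def Qm (P : Matrix ι ι F) : Matrix (Fin 1 ⊕ ι) (Fin 1 ⊕ ι) F :=
  fromBlocks 1 0 0 P

lemma rowM_mul_transpose (u : ι → F) (P : Matrix ι ι F) :
    rowM u * Pᵀ = rowM (P *ᵥ u) := by
  ext i j
  simp [rowM, mul_apply, mulVec, dotProduct, mul_comm]

lemma mul_colM (u : ι → F) (P : Matrix ι ι F) :
    P * colM u = colM (P *ᵥ u) := by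
  ext i j
  simp [colM, mul_apply, mulVec, dotProduct]

lemma blk_congr (P : Matrix ι ι F) (u : ι → F) (B : Matrix ι ι F) :
    Qm P * blk 0 u B * (Qm P)ᵀ = blk 0 (P *ᵥ u) (P * B * Pᵀ) := by
  rw [Qm, blk, blk, fromBlocks_transpose, fromBlocks_multiply, fromBlocks_multiply]
  rw [fromBlocks_inj]
  refine ⟨?_, ?_, ?_, ?_⟩ <;>
    simp [rowM_mul_transpose, mul_colM, Matrix.mul_assoc]

lemma isUnit_Qm {P : Matrix ι ι F} (hP : IsUnit P) : IsUnit (Qm P) := by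
  rw [Qm, isUnit_fromBlocks_zero₁₂]
  exact ⟨isUnit_one, hP⟩

lemma isUnit_transpose {κ : Type} [Fintype κ] [DecidableEq κ] {M : Matrix κ κ F} (h : IsUnit M) :
    IsUnit Mᵀ := by
  rw [Matrix.isUnit_iff_isUnit_det, det_transpose, ← Matrix.isUnit_iff_isUnit_det]
  exact h

lemma conj_conj (P : (Matrix ι ι F)ˣ) (B : Matrix ι ι F) :
    ((P⁻¹ : (Matrix ι ι F)ˣ) : Matrix ι ι F) *
        ((P : Matrix ι ι F) * B * (P : Matrix ι ι F)ᵀ) *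
        ((P⁻¹ : (Matrix ι ι F)ˣ) : Matrix ι ι F)ᵀ = B := by
  have h1 : ((P⁻¹ : (Matrix ι ι F)ˣ) : Matrix ι ι F) * (P : Matrix ι ι F) = 1 := P.inv_mul
  have h2 : (P : Matrix ι ι F)ᵀ * ((P⁻¹ : (Matrix ι ι F)ˣ) : Matrix ι ι F)ᵀ = 1 := by
    rw [← transpose_mul, h1, transpose_one]
  simp only [Matrix.mul_assoc]
  rw [h2, Matrix.mul_one, ← Matrix.mul_assoc, h1, Matrix.one_mul]

/-- congruence between bordered sets -/
def fibEquiv (P : (Matrix ι ι F)ˣ) (u v : ι → F) (huv : (P : Matrix ι ι F) *ᵥ u = v) :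
    fib (F := F) u ≃ fib (F := F) v where
  toFun B := ⟨(P : Matrix ι ι F) * B.1 * (P : Matrix ι ι F)ᵀ, by
      have hs := B.2.1
      rw [Matrix.IsSymm] at hs ⊢
      simp [transpose_mul, Matrix.mul_assoc, hs], by
      have := B.2.2
      have h := blk_congr (P : Matrix ι ι F) u B.1
      rw [huv] at h
      rw [← h]
      exact ((isUnit_Qm P.isUnit).mul this).mul (isUnit_transpose (isUnit_Qm P.isUnit))⟩
  invFun B := ⟨((P⁻¹ : (Matrix ι ι F)ˣ) : Matrix ι ι F) * B.1 *
      ((P⁻¹ : (Matrix ι ι F)ˣ) : Matrix ι ι F)ᵀ, by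
      have hs := B.2.1
      rw [Matrix.IsSymm] at hs ⊢
      simp [transpose_mul, Matrix.mul_assoc, hs], by
      have := B.2.2
      have huv' : ((P⁻¹ : (Matrix ι ι F)ˣ) : Matrix ι ι F) *ᵥ v = u := by
        rw [← huv, mulVec_mulVec, Units.inv_mul, one_mulVec]
      have h := blk_congr ((P⁻¹ : (Matrix ι ι F)ˣ) : Matrix ι ι F) v B.1
      rw [huv'] at h
      rw [← h]
      exact ((isUnit_Qm P⁻¹.isUnit).mul this).mul (isUnit_transpose (isUnit_Qm P⁻¹.isUnit))⟩
  left_inv := by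
    rintro ⟨B, hB⟩
    exact Subtype.ext (conj_conj P B)
  right_inv := by
    rintro ⟨B, hB⟩
    apply Subtype.ext
    have := conj_conj P⁻¹ B
    rwa [inv_inv] at this

end PivotZero
section Transitive

variable {ι : Type} [Fintype ι] [DecidableEq ι]

lemma exists_unit_mulVec_single (i₀ : ι) (u : ι → F) (hu : u ≠ 0) :
    ∃ P : (Matrix ι ι F)ˣ, (P : Matrix ι ι F) *ᵥ Pi.single i₀ 1 = u := by
  obtain ⟨k, hk⟩ : ∃ k, u k ≠ 0 := by
    by_contra h
    push_neg at h
    exact hu (funext h)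
  set T : Matrix ι ι F := (1 : Matrix ι ι F).updateCol k u with hT
  have hTdet : T.det = u k := by
    rw [hT, ← Matrix.cramer_apply, Matrix.cramer_one]
    rfl
  have hTunit : IsUnit T := by
    rw [Matrix.isUnit_iff_isUnit_det, hTdet]
    exact hk.isUnit
  have hTv : T *ᵥ Pi.single k 1 = u := by
    rw [Matrix.mulVec_single]
    funext i
    simp [hT, Matrix.updateCol_apply]
  set σ : Equiv.Perm ι := Equiv.swap i₀ k with hσ
  set S : Matrix ι ι F := σ.permMatrix F with hS
  have hSdet : IsUnit S.det := by
    rw [hS, Matrix.det_permutation]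
    rcases Int.units_eq_one_or (Equiv.Perm.sign σ) with h | h <;> rw [h] <;> simp
  have hSunit : IsUnit S := (Matrix.isUnit_iff_isUnit_det S).mpr hSdet
  have hSv : S *ᵥ Pi.single i₀ 1 = Pi.single k 1 := by
    funext i
    rw [Matrix.mulVec_single]
    simp only [hS, Equiv.Perm.permMatrix, PEquiv.toMatrix_apply, Equiv.toPEquiv_apply,
      Option.mem_def, Option.some.injEq, mul_one]
    by_cases hik : i = k
    · subst hik
      have h1 : σ i = i₀ := Equiv.swap_apply_right i₀ i
      simp [h1, Pi.single_eq_same]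
    · have hne : σ i ≠ i₀ := by
        intro hcon
        apply hik
        have := congrArg σ hcon
        rwa [hσ, Equiv.swap_apply_self, Equiv.swap_apply_left] at this
      simp [Pi.single_eq_of_ne hik, hne]
  refine ⟨(hTunit.mul hSunit).unit, ?_⟩
  rw [IsUnit.unit_spec, ← Matrix.mulVec_mulVec, hSv, hTv]

end Transitive
section Hyperbolic

variable {κ : Type} [Fintype κ] [DecidableEq κ]

lemma isSymm_toBlocks₂₂ {α β : Type} {A : Matrix (α ⊕ β) (α ⊕ β) F} (h : A.IsSymm) :
    A.toBlocks₂₂.IsSymm := by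
  ext i j
  show A.toBlocks₂₂ j i = A.toBlocks₂₂ i j
  exact h.apply _ _

def Hm (b : F) : Matrix (Fin 1 ⊕ Fin 1) (Fin 1 ⊕ Fin 1) F :=
  fromBlocks (oneM 0) (oneM 1) (oneM 1) (oneM b)

def Hinv (b : F) : Matrix (Fin 1 ⊕ Fin 1) (Fin 1 ⊕ Fin 1) F :=
  fromBlocks (oneM (-b)) (oneM 1) (oneM 1) (oneM 0)

lemma Hm_mul_Hinv (b : F) : Hm b * Hinv b = 1 := by
  rw [Hm, Hinv, fromBlocks_multiply, ← fromBlocks_one, fromBlocks_inj]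
  refine ⟨?_, ?_, ?_, ?_⟩ <;> simp

lemma Hinv_mul_Hm (b : F) : Hinv b * Hm b = 1 := by
  rw [Hm, Hinv, fromBlocks_multiply, ← fromBlocks_one, fromBlocks_inj]
  refine ⟨?_, ?_, ?_, ?_⟩ <;> simp

def invertible_Hm (b : F) : Invertible (Hm b) :=
  ⟨Hinv b, Hinv_mul_Hm b, Hm_mul_Hinv b⟩

def Wm (v : κ → F) : Matrix (Fin 1 ⊕ Fin 1) κ F :=
  Matrix.of fun p j => Sum.elim (fun _ => (0 : F)) (fun _ => v j) p

def Wmt (v : κ → F) : Matrix κ (Fin 1 ⊕ Fin 1) F := (Wm v)ᵀ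

lemma Wmt_Hinv_Wm (v : κ → F) (b : F) : Wmt v * Hinv b * Wm v = 0 := by
  ext j j'
  simp [Wmt, Wm, Hinv, oneM, mul_apply, Fintype.sum_sum_type, fromBlocks]

def asc (κ : Type) : (Fin 1 ⊕ (Fin 1 ⊕ κ)) ≃ ((Fin 1 ⊕ Fin 1) ⊕ κ) :=
  (Equiv.sumAssoc (Fin 1) (Fin 1) κ).symm

lemma reindex_blk0_single (b : F) (v : κ → F) (C : Matrix κ κ F) :
    (Matrix.reindex (asc κ) (asc κ)) (blk 0 (Pi.single (Sum.inl 0) 1) (blk b v C))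
      = fromBlocks (Hm b) (Wm v) (Wmt v) C := by
  ext i j
  rcases i with (i | i) | i <;> rcases j with (j | j) | j <;>
    first
      | rfl
      | simp [Matrix.reindex_apply, Matrix.submatrix_apply, asc, Equiv.sumAssoc, blk,
          fromBlocks, Hm, oneM, rowM, colM, Wm, Wmt, Pi.single_apply, Fin.fin_one_eq_zero]

lemma isUnit_blk0_single (b : F) (v : κ → F) (C : Matrix κ κ F) :
    IsUnit (blk 0 (Pi.single (Sum.inl 0) 1) (blk b v C)) ↔ IsUnit C := by
  have h1 : IsUnit (blk 0 (Pi.single (Sum.inl 0) 1) (blk b v C)) ↔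
      IsUnit ((Matrix.reindex (asc κ) (asc κ)) (blk 0 (Pi.single (Sum.inl 0) 1) (blk b v C))) := by
    simp only [Matrix.isUnit_iff_isUnit_det, det_reindex_self]
  rw [h1, reindex_blk0_single]
  letI := invertible_Hm (F := F) b
  rw [isUnit_fromBlocks_iff_of_invertible₁₁]
  have hinv : ⅟(Hm b) = Hinv b := invOf_eq_right_inv (Hm_mul_Hinv b)
  rw [hinv, Wmt_Hinv_Wm, sub_zero]

lemma card_fib_single :
    Nat.card (fib (F := F) (Pi.single (Sum.inl 0 : Fin 1 ⊕ κ) 1)) =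
      q ^ (Fintype.card κ + 1) * Nat.card {C : Matrix κ κ F // C.IsSymm ∧ IsUnit C} := by
  have e : fib (F := F) (Pi.single (Sum.inl 0 : Fin 1 ⊕ κ) 1) ≃
      F × (κ → F) × {C : Matrix κ κ F // C.IsSymm ∧ IsUnit C} :=
    { toFun := fun B =>
        ⟨B.1 (Sum.inl 0) (Sum.inl 0), fun j => B.1 (Sum.inl 0) (Sum.inr j),
          ⟨B.1.toBlocks₂₂, isSymm_toBlocks₂₂ B.2.1, by
            have hU := B.2.2
            rw [← blk_ext B.2.1] at hU
            exact (isUnit_blk0_single _ _ _).mp hU⟩⟩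
      invFun := fun x =>
        ⟨blk x.1 x.2.1 x.2.2.1, (blk_isSymm_iff _ _ _).mpr x.2.2.2.1,
          (isUnit_blk0_single _ _ _).mpr x.2.2.2.2⟩
      left_inv := fun B => Subtype.ext (blk_ext B.2.1)
      right_inv := fun x => rfl }
  rw [Nat.card_congr e, Nat.card_prod, Nat.card_prod]
  have h1 : Nat.card F = q := Nat.card_eq_fintype_card
  have h2 : Nat.card (κ → F) = q ^ Fintype.card κ := by
    simp [Nat.card_eq_fintype_card]
  rw [h1, h2, pow_succ]
  ring

end Hyperbolic
section PivotZeroCount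

variable {κ : Type} [Fintype κ] [DecidableEq κ]

lemma card_pivot_zero :
    Nat.card {A : Matrix (Fin 1 ⊕ (Fin 1 ⊕ κ)) (Fin 1 ⊕ (Fin 1 ⊕ κ)) F //
        (A.IsSymm ∧ IsUnit A) ∧ A (Sum.inl 0) (Sum.inl 0) = 0}
      = (q ^ (Fintype.card κ + 1) - 1) * (q ^ (Fintype.card κ + 1) *
        Nat.card {C : Matrix κ κ F // C.IsSymm ∧ IsUnit C}) := by
  classical
  set ι := Fin 1 ⊕ κ with hι
  set X := {A : Matrix (Fin 1 ⊕ ι) (Fin 1 ⊕ ι) F //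
      (A.IsSymm ∧ IsUnit A) ∧ A (Sum.inl 0) (Sum.inl 0) = 0} with hX
  have hg : ∀ A : X, (fun j => A.1 (Sum.inl 0) (Sum.inr j)) ≠ (0 : ι → F) := by
    rintro ⟨A, ⟨hs, hu⟩, h0⟩ hzero
    have hdet : A.det = 0 := by
      apply det_eq_zero_of_row_eq_zero (Sum.inl 0)
      rintro (j | j)
      · rw [Fin.fin_one_eq_zero j]; exact h0
      · exact congrFun hzero j
    exact ((Matrix.isUnit_iff_isUnit_det A).mp hu).ne_zero hdet
  let g : X → {u : ι → F // u ≠ 0} := fun A => ⟨fun j => A.1 (Sum.inl 0) (Sum.inr j), hg A⟩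
  have hcard : Nat.card X = ∑ u : {u : ι → F // u ≠ 0}, Nat.card {A : X // g A = u} := by
    rw [← Nat.card_congr (Equiv.sigmaFiberEquiv g)]
    exact nat_card_sigma _
  have hfiber : ∀ u : {u : ι → F // u ≠ 0},
      Nat.card {A : X // g A = u} = Nat.card (fib (F := F) u.1) := by
    intro u
    apply Nat.card_congr
    refine
      { toFun := fun A => ⟨A.1.1.toBlocks₂₂, isSymm_toBlocks₂₂ A.1.2.1.1, ?_⟩
        invFun := fun B => ⟨⟨blk 0 u.1 B.1, ⟨(blk_isSymm_iff _ _ _).mpr B.2.1, B.2.2⟩, rfl⟩,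
          Subtype.ext rfl⟩
        left_inv := ?_
        right_inv := fun B => Subtype.ext rfl }
    · obtain ⟨⟨A, ⟨hs, hu⟩, h0⟩, hgA⟩ := A
      have h := blk_ext hs
      rw [h0] at h
      have hgA' : (fun j => A (Sum.inl 0) (Sum.inr j)) = u.1 := congrArg Subtype.val hgA
      rw [hgA'] at h
      show IsUnit (blk 0 u.1 A.toBlocks₂₂)
      rw [h]
      exact hu
    · rintro ⟨⟨A, ⟨hs, hu⟩, h0⟩, hgA⟩
      apply Subtype.ext
      apply Subtype.ext
      show blk 0 u.1 A.toBlocks₂₂ = A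
      have h := blk_ext hs
      rw [h0] at h
      have hgA' : (fun j => A (Sum.inl 0) (Sum.inr j)) = u.1 := congrArg Subtype.val hgA
      rw [hgA'] at h
      exact h
  have hconst : ∀ u : {u : ι → F // u ≠ 0},
      Nat.card (fib (F := F) u.1) =
        Nat.card (fib (F := F) (Pi.single (Sum.inl 0 : ι) 1)) := by
    intro u
    obtain ⟨P, hP⟩ := exists_unit_mulVec_single (Sum.inl 0 : ι) u.1 u.2
    exact (Nat.card_congr (fibEquiv P _ _ hP)).symm
  have hnum : Fintype.card {u : ι → F // u ≠ 0} = q ^ (Fintype.card κ + 1) - 1 := by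
    have h1 : Fintype.card {u : ι → F // ¬ u = 0} =
        Fintype.card (ι → F) - Fintype.card {u : ι → F // u = 0} :=
      Fintype.card_subtype_compl _
    have h2 : Fintype.card (ι → F) = q ^ (Fintype.card κ + 1) := by
      rw [Fintype.card_fun]
      congr 1
      simp [hι, add_comm]
    simpa [Fintype.card_subtype_eq, h2] using h1
  rw [hcard]
  calc (∑ u : {u : ι → F // u ≠ 0}, Nat.card {A : X // g A = u})
      = ∑ _u : {u : ι → F // u ≠ 0},
          Nat.card (fib (F := F) (Pi.single (Sum.inl 0 : ι) 1)) := by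
        refine Finset.sum_congr rfl fun u _ => ?_
        rw [hfiber u, hconst u]
    _ = Fintype.card {u : ι → F // u ≠ 0} *
          Nat.card (fib (F := F) (Pi.single (Sum.inl 0 : ι) 1)) := by
        rw [Finset.sum_const, Finset.card_univ, smul_eq_mul]
    _ = (q ^ (Fintype.card κ + 1) - 1) * (q ^ (Fintype.card κ + 1) *
          Nat.card {C : Matrix κ κ F // C.IsSymm ∧ IsUnit C}) := by
        rw [hnum, card_fib_single]

end PivotZeroCount
section Recursion

variable (F) in
noncomputable def Icount (k : ℕ) : ℕ :=
  Nat.card {A : Matrix (Fin k) (Fin k) F // A.IsSymm ∧ IsUnit A}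

lemma Icount_zero : Icount F 0 = 1 := by
  rw [Icount]
  have : ∀ A : Matrix (Fin 0) (Fin 0) F, A.IsSymm ∧ IsUnit A := by
    intro A
    constructor
    · ext i j; exact absurd i.2 (by omega)
    · rw [Matrix.isUnit_iff_isUnit_det, Matrix.det_fin_zero]; exact isUnit_one
  haveI : Unique {A : Matrix (Fin 0) (Fin 0) F // A.IsSymm ∧ IsUnit A} :=
    { default := ⟨0, this 0⟩
      uniq := fun A => Subtype.ext (by ext i j; exact absurd i.2 (by omega)) }
  exact Nat.card_unique

lemma Icount_one : Icount F 1 = q - 1 := by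
  rw [Icount]
  have e : {A : Matrix (Fin 1) (Fin 1) F // A.IsSymm ∧ IsUnit A} ≃ {a : F // a ≠ 0} :=
    { toFun := fun A => ⟨A.1 0 0, by
        have := A.2.2
        rw [Matrix.isUnit_iff_isUnit_det, Matrix.det_fin_one] at this
        exact this.ne_zero⟩
      invFun := fun a => ⟨oneM a.1, by
        constructor
        · ext i j; rfl
        · rw [Matrix.isUnit_iff_isUnit_det, Matrix.det_fin_one]
          exact a.2.isUnit⟩
      left_inv := fun A => Subtype.ext (by
        ext i j
        rw [Fin.fin_one_eq_zero i, Fin.fin_one_eq_zero j]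
        rfl)
      right_inv := fun a => rfl }
  rw [Nat.card_congr e, Nat.card_eq_fintype_card]
  have h1 : Fintype.card {a : F // ¬ a = 0} = q - Fintype.card {a : F // a = 0} :=
    Fintype.card_subtype_compl _
  simpa [Fintype.card_subtype_eq] using h1

lemma Icount_rec (m : ℕ) :
    Icount F (m + 2) =
      (q ^ (m + 1) - 1) * (q ^ (m + 1) * Icount F m) +
        (q - 1) * (q ^ (m + 1) * Icount F (m + 1)) := by
  classical
  have e : (Fin 1 ⊕ (Fin 1 ⊕ Fin m)) ≃ Fin (m + 2) :=
    (Equiv.sumCongr (Equiv.refl (Fin 1)) finSumFinEquiv).trans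
      (finSumFinEquiv.trans (finCongr (by omega)))
  have h0 : Icount F (m + 2) =
      Nat.card {A : Matrix (Fin 1 ⊕ (Fin 1 ⊕ Fin m)) (Fin 1 ⊕ (Fin 1 ⊕ Fin m)) F //
        A.IsSymm ∧ IsUnit A} := (card_symm_unit_congr e).symm
  have hsplit := nat_card_subtype_split
    (α := Matrix (Fin 1 ⊕ (Fin 1 ⊕ Fin m)) (Fin 1 ⊕ (Fin 1 ⊕ Fin m)) F)
    (fun A => A.IsSymm ∧ IsUnit A) (fun A => A (Sum.inl 0) (Sum.inl 0) = 0)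
  rw [h0, hsplit]
  have hC1 : Nat.card {C : Matrix (Fin m) (Fin m) F // C.IsSymm ∧ IsUnit C} = Icount F m := rfl
  have hC2 : Nat.card {C : Matrix (Fin 1 ⊕ Fin m) (Fin 1 ⊕ Fin m) F // C.IsSymm ∧ IsUnit C}
      = Icount F (m + 1) := by
    rw [Icount]
    exact card_symm_unit_congr (finSumFinEquiv.trans (finCongr (Nat.add_comm 1 m)))
  congr 1
  · have h := card_pivot_zero (F := F) (κ := Fin m)
    rw [Fintype.card_fin] at h
    rw [← hC1]
    exact h
  · have h := card_pivot_ne (F := F) (ι := Fin 1 ⊕ Fin m)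
    have hcι : Fintype.card (Fin 1 ⊕ Fin m) = m + 1 := by simp [add_comm]
    rw [hcι, hC2] at h
    rw [h]
    ring

end Recursion
section Closed

variable (F) in
def Pprod (t : ℕ) : ℕ := ∏ i ∈ Finset.range t, (q ^ (2*i+1) - 1)

variable (F) in
def fclosed (r : ℕ) : ℕ := q ^ ((r/2) * (r/2 + 1)) * Pprod F ((r+1)/2)

lemma one_le_q_pow (k : ℕ) : 1 ≤ q ^ k := Nat.one_le_pow _ _ Fintype.card_pos

lemma Pprod_cast (t : ℕ) :
    ((Pprod F t : ℕ) : ℚ) = ∏ i ∈ Finset.range t, ((q : ℚ)^(2*i+1) - 1) := by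
  rw [Pprod, Nat.cast_prod]
  exact Finset.prod_congr rfl fun i _ => by
    rw [Nat.cast_sub (one_le_q_pow _), Nat.cast_pow, Nat.cast_one]

lemma fclosed_cast (r : ℕ) :
    ((fclosed F r : ℕ) : ℚ) =
      (q : ℚ) ^ ((r/2) * (r/2 + 1)) * ∏ i ∈ Finset.range ((r+1)/2), ((q : ℚ)^(2*i+1) - 1) := by
  rw [fclosed, Nat.cast_mul, Nat.cast_pow, Pprod_cast]

lemma fclosed_step (m : ℕ) :
    (q ^ (m+1) - 1) * (q ^ (m+1) * fclosed F m) + (q - 1) * (q ^ (m+1) * fclosed F (m+1))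
      = fclosed F (m+2) := by
  have hq1 : 1 ≤ q := Fintype.card_pos
  apply Nat.cast_inj (R := ℚ) |>.mp
  push_cast [Nat.cast_sub (one_le_q_pow (m+1)), Nat.cast_sub hq1]
  rcases Nat.even_or_odd m with ⟨t, rfl⟩ | ⟨t, rfl⟩
  · have d1 : (t + t) / 2 = t := by omega
    have d2 : (t + t + 1) / 2 = t := by omega
    have d3 : (t + t + 1 + 1) / 2 = t + 1 := by omega
    have d4 : (t + t + 2) / 2 = t + 1 := by omega
    have d5 : (t + t + 2 + 1) / 2 = t + 1 := by omega
    rw [fclosed_cast, fclosed_cast, fclosed_cast]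
    simp only [d1, d2, d3, d4, d5]
    rw [Finset.prod_range_succ]
    ring
  · have d1 : (2*t + 1) / 2 = t := by omega
    have d2 : (2*t + 1 + 1) / 2 = t + 1 := by omega
    have d3 : (2*t + 1 + 1 + 1) / 2 = t + 1 := by omega
    have d4 : (2*t + 1 + 2) / 2 = t + 1 := by omega
    have d5 : (2*t + 1 + 2 + 1) / 2 = t + 2 := by omega
    rw [fclosed_cast, fclosed_cast, fclosed_cast]
    simp only [d1, d2, d3, d4, d5]
    rw [Finset.prod_range_succ (n := t + 1)]
    ring

theorem Icount_closed : ∀ r, Icount F r = fclosed F r := by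
  intro r
  induction r using Nat.strong_induction_on with
  | _ r ih =>
    match r with
    | 0 => simpa [fclosed, Pprod] using Icount_zero (F := F)
    | 1 => rw [Icount_one]; simp [fclosed, Pprod]
    | (m+2) => rw [Icount_rec, ih m (by omega), ih (m+1) (by omega), fclosed_step]

end Closed
section MainCount

variable {n r : ℕ}

lemma ker_eq_bot_of_rank {B : Matrix (Fin n) (Fin r) F} (hB : B.rank = r) :
    LinearMap.ker B.mulVecLin = ⊥ := by
  have h := LinearMap.finrank_range_add_finrank_ker B.mulVecLin
  rw [Matrix.rank] at hB
  rw [hB] at h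
  have hdom : Module.finrank F (Fin r → F) = r := by
    simp [Module.finrank_fintype_fun_eq_card]
  rw [hdom] at h
  have : Module.finrank F (LinearMap.ker B.mulVecLin) = 0 := by omega
  exact Submodule.finrank_eq_zero.mp this

lemma exists_left_inverse {B : Matrix (Fin n) (Fin r) F} (hB : B.rank = r) :
    ∃ L : Matrix (Fin r) (Fin n) F, L * B = 1 := by
  obtain ⟨g, hg⟩ := LinearMap.exists_leftInverse_of_injective B.mulVecLin
    (ker_eq_bot_of_rank hB)
  refine ⟨LinearMap.toMatrix' g, ?_⟩
  have h2 : LinearMap.toMatrix' g * LinearMap.toMatrix' B.mulVecLin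
      = LinearMap.toMatrix' (g ∘ₗ B.mulVecLin) := (LinearMap.toMatrix'_comp _ _).symm
  rw [← Matrix.toLin'_apply', LinearMap.toMatrix'_toLin'] at h2
  rw [h2]
  rw [show g ∘ₗ Matrix.toLin' B = LinearMap.id from hg, LinearMap.toMatrix'_id]

lemma isUnit_of_rank_eq {M : Matrix (Fin r) (Fin r) F} (hM : M.rank = r) : IsUnit M := by
  obtain ⟨L, hL⟩ := exists_left_inverse hM
  exact (Matrix.isUnit_iff_isUnit_det M).mpr (Matrix.isUnit_det_of_right_inverse (mul_eq_one_comm.mp hL))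

lemma exists_factor {k : ℕ} {B : Matrix (Fin n) (Fin r) F} {A : Matrix (Fin n) (Fin k) F}
    (h : ∀ j, (fun i => A i j) ∈ LinearMap.range B.mulVecLin) :
    ∃ M : Matrix (Fin r) (Fin k) F, B * M = A := by
  choose m hm using h
  refine ⟨Matrix.of fun i j => m j i, ?_⟩
  ext i j
  have h1 := congrFun (hm j) i
  rw [Matrix.mulVecLin_apply] at h1
  rw [← h1]
  simp [mul_apply, Matrix.mulVec, dotProduct]

lemma rank_BSBt {B : Matrix (Fin n) (Fin r) F} {S : Matrix (Fin r) (Fin r) F}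
    (hB : B.rank = r) (hS : IsUnit S) : (B * S * Bᵀ).rank = r := by
  obtain ⟨L, hL⟩ := exists_left_inverse hB
  have hle : (B * S * Bᵀ).rank ≤ r := by
    calc (B * S * Bᵀ).rank ≤ (B * S).rank := Matrix.rank_mul_le_left _ _
      _ ≤ B.rank := Matrix.rank_mul_le_left _ _
      _ = r := hB
  have hrec : L * (B * S * Bᵀ) * Lᵀ = S := by
    have hBt : Bᵀ * Lᵀ = 1 := by rw [← transpose_mul, hL, transpose_one]
    calc L * (B * S * Bᵀ) * Lᵀ = (L * B) * S * (Bᵀ * Lᵀ) := by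
          simp only [Matrix.mul_assoc]
      _ = S := by rw [hL, hBt, Matrix.one_mul, Matrix.mul_one]
  have hSr : S.rank = r := by rw [Matrix.rank_of_isUnit S hS, Fintype.card_fin]
  have hge : r ≤ (B * S * Bᵀ).rank := by
    calc r = S.rank := hSr.symm
      _ = (L * (B * S * Bᵀ) * Lᵀ).rank := by rw [hrec]
      _ ≤ (L * (B * S * Bᵀ)).rank := Matrix.rank_mul_le_left _ _
      _ ≤ (B * S * Bᵀ).rank := Matrix.rank_mul_le_right _ _
  omega

lemma range_BSBt {B : Matrix (Fin n) (Fin r) F} {S : Matrix (Fin r) (Fin r) F}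
    (hB : B.rank = r) (hS : IsUnit S) :
    LinearMap.range (B * S * Bᵀ).mulVecLin = LinearMap.range B.mulVecLin := by
  have hle : LinearMap.range (B * S * Bᵀ).mulVecLin ≤ LinearMap.range B.mulVecLin := by
    rw [Matrix.mul_assoc, Matrix.mulVecLin_mul]
    exact LinearMap.range_comp_le_range _ _
  apply Submodule.eq_of_le_of_finrank_le hle
  have h1 : Module.finrank F (LinearMap.range B.mulVecLin) = r := hB
  have h2 : Module.finrank F (LinearMap.range (B * S * Bᵀ).mulVecLin) = r := rank_BSBt hB hS
  omega

end MainCount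
section Decomp

variable {n r : ℕ}

lemma exists_decomp {A : Matrix (Fin n) (Fin n) F} (hs : A.IsSymm) (hr : A.rank = r) :
    ∃ (B : Matrix (Fin n) (Fin r) F) (S : Matrix (Fin r) (Fin r) F),
      B.rank = r ∧ S.IsSymm ∧ IsUnit S ∧ B * S * Bᵀ = A := by
  classical
  set V := LinearMap.range A.mulVecLin with hV
  have hVr : Module.finrank F V = r := hr
  let b : Module.Basis (Fin r) F V := Module.finBasisOfFinrankEq F V hVr
  set B : Matrix (Fin n) (Fin r) F := Matrix.of fun i j => (b j : Fin n → F) i with hBdef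
  have hBt : Bᵀ = fun j => ((b j : Fin n → F)) := rfl
  have hBcols : LinearIndependent F Bᵀ := by
    rw [hBt]
    exact b.linearIndependent.map' V.subtype (Submodule.ker_subtype V)
  have hBrank : B.rank = r := by
    have := LinearIndependent.rank_matrix (M := Bᵀ) hBcols
    rw [Fintype.card_fin] at this
    rw [← Matrix.rank_transpose]
    exact this
  have hrange : LinearMap.range B.mulVecLin = V := by
    rw [Matrix.range_mulVecLin, show B.col = Bᵀ from rfl, hBt]
    have h1 : Set.range (fun j => ((b j : Fin n → F))) = V.subtype '' Set.range b := by
      rw [← Set.range_comp]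
      rfl
    rw [h1, Submodule.span_image, b.span_eq, Submodule.map_top, Submodule.range_subtype]
  have hcolsA : ∀ j, (fun i => A i j) ∈ LinearMap.range B.mulVecLin := by
    intro j
    rw [hrange, hV]
    refine ⟨Pi.single j 1, ?_⟩
    rw [Matrix.mulVecLin_apply, Matrix.mulVec_single]
    funext i
    simp [Matrix.col]
  obtain ⟨M, hM⟩ := exists_factor hcolsA
  obtain ⟨L, hL⟩ := exists_left_inverse hBrank
  set S : Matrix (Fin r) (Fin r) F := L * A * Lᵀ with hSdef
  have e1 : B * L * A = A := by
    calc B * L * A = B * L * (B * M) := by rw [hM]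
      _ = B * (L * B) * M := by simp only [Matrix.mul_assoc]
      _ = B * M := by rw [hL, Matrix.mul_one]
      _ = A := hM
  have e2 : B * S * Bᵀ = A := by
    calc B * S * Bᵀ = (B * L * A) * (Lᵀ * Bᵀ) := by
          rw [hSdef]; simp only [Matrix.mul_assoc]
      _ = A * Lᵀ * Bᵀ := by rw [e1, Matrix.mul_assoc]
      _ = (B * L * Aᵀ)ᵀ := by
          rw [transpose_mul, transpose_mul, transpose_transpose, Matrix.mul_assoc]
      _ = (B * L * A)ᵀ := by rw [hs.eq]
      _ = Aᵀ := by rw [e1]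
      _ = A := hs.eq
  have hSsymm : S.IsSymm := by
    rw [Matrix.IsSymm, hSdef, transpose_mul, transpose_mul, transpose_transpose,
      Matrix.mul_assoc]
    rw [hs.eq]
  have hSunit : IsUnit S := by
    apply isUnit_of_rank_eq
    have hle : S.rank ≤ r := by
      have := Matrix.rank_le_card_width S
      simpa using this
    have hge : r ≤ S.rank := by
      calc r = A.rank := hr.symm
        _ = (B * (S * Bᵀ)).rank := by rw [← Matrix.mul_assoc, e2]
        _ ≤ (S * Bᵀ).rank := Matrix.rank_mul_le_right _ _
        _ ≤ S.rank := Matrix.rank_mul_le_left _ _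
    omega
  exact ⟨B, S, hBrank, hSsymm, hSunit, e2⟩

end Decomp
section FullRank

variable {n r : ℕ}

lemma rank_eq_iff_li {B : Matrix (Fin n) (Fin r) F} :
    B.rank = r ↔ LinearIndependent F Bᵀ := by
  constructor
  · intro h
    change LinearIndependent F B.col
    rw [linearIndependent_iff_card_eq_finrank_span, Fintype.card_fin, Set.finrank,
      ← Matrix.rank_eq_finrank_span_cols]
    exact h.symm
  · intro h
    change LinearIndependent F B.col at h
    rw [Matrix.rank_eq_finrank_span_cols, ← Set.finrank,
      ← linearIndependent_iff_card_eq_finrank_span.mp h, Fintype.card_fin]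

lemma card_full_rank (hrn : r ≤ n) :
    Nat.card {B : Matrix (Fin n) (Fin r) F // B.rank = r}
      = ∏ i : Fin r, (q ^ n - q ^ (i : ℕ)) := by
  have e : {B : Matrix (Fin n) (Fin r) F // B.rank = r} ≃
      {s : Fin r → (Fin n → F) // LinearIndependent F s} :=
    Equiv.subtypeEquiv
      ⟨fun B => Bᵀ, fun s => (Matrix.of s)ᵀ, fun B => rfl, fun s => rfl⟩
      (fun B => rank_eq_iff_li)
  rw [Nat.card_congr e]
  have hfr : r ≤ Module.finrank F (Fin n → F) := by
    rw [Module.finrank_fintype_fun_eq_card, Fintype.card_fin]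
    exact hrn
  rw [card_linearIndependent hfr]
  apply Finset.prod_congr rfl
  intro i _
  rw [Module.finrank_fintype_fun_eq_card, Fintype.card_fin]

end FullRank

section MainOrbit

variable {n r : ℕ}

lemma isSymm_BSBt {B : Matrix (Fin n) (Fin r) F} {S : Matrix (Fin r) (Fin r) F}
    (hS : S.IsSymm) : (B * S * Bᵀ).IsSymm := by
  rw [Matrix.IsSymm, transpose_mul, transpose_mul, transpose_transpose, hS.eq,
    Matrix.mul_assoc]

lemma conj_outer {n r : ℕ} (B₀ : Matrix (Fin n) (Fin r) F)
    (S₀ Gm Gi : Matrix (Fin r) (Fin r) F) (h : Gm * Gi = 1) :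
    B₀ * Gm * (Gi * S₀ * Giᵀ) * (B₀ * Gm)ᵀ = B₀ * S₀ * B₀ᵀ := by
  have ht : Giᵀ * Gmᵀ = 1 := by rw [← transpose_mul, h, transpose_one]
  calc B₀ * Gm * (Gi * S₀ * Giᵀ) * (B₀ * Gm)ᵀ
      = B₀ * ((Gm * Gi) * (S₀ * (Giᵀ * (Gmᵀ * B₀ᵀ)))) := by
        rw [transpose_mul]
        simp only [Matrix.mul_assoc]
    _ = B₀ * (S₀ * (Giᵀ * (Gmᵀ * B₀ᵀ))) := by rw [h, Matrix.one_mul]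
    _ = B₀ * (S₀ * ((Giᵀ * Gmᵀ) * B₀ᵀ)) := by rw [Matrix.mul_assoc]
    _ = B₀ * (S₀ * B₀ᵀ) := by rw [ht, Matrix.one_mul]
    _ = B₀ * S₀ * B₀ᵀ := by rw [Matrix.mul_assoc]

lemma card_main (hrn : r ≤ n) :
    Nat.card {A : Matrix (Fin n) (Fin n) F // A.IsSymm ∧ A.rank = r} *
      Nat.card ((Matrix (Fin r) (Fin r) F)ˣ)
      = (∏ i : Fin r, (q ^ n - q ^ (i : ℕ))) * Icount F r := by
  classical
  set T := {A : Matrix (Fin n) (Fin n) F // A.IsSymm ∧ A.rank = r} with hT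
  set Pt := {p : Matrix (Fin n) (Fin r) F × Matrix (Fin r) (Fin r) F //
      p.1.rank = r ∧ (p.2.IsSymm ∧ IsUnit p.2)} with hPt
  have hPtcard : Nat.card Pt
      = (∏ i : Fin r, (q ^ n - q ^ (i : ℕ))) * Icount F r := by
    have e2 : Pt ≃ {B : Matrix (Fin n) (Fin r) F // B.rank = r} ×
        {S : Matrix (Fin r) (Fin r) F // S.IsSymm ∧ IsUnit S} :=
      @Equiv.subtypeProdEquivProd (Matrix (Fin n) (Fin r) F) (Matrix (Fin r) (Fin r) F)
        (fun B => B.rank = r) (fun S => S.IsSymm ∧ IsUnit S)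
    rw [Nat.card_congr e2, Nat.card_prod, card_full_rank hrn]
    rfl
  let φ : Pt → T := fun p =>
    ⟨p.1.1 * p.1.2 * p.1.1ᵀ, isSymm_BSBt p.2.2.1, rank_BSBt p.2.1 p.2.2.2⟩
  haveI : Fintype T := Fintype.ofFinite T
  have hfib : ∀ A : T, Nat.card {p : Pt // φ p = A}
      = Nat.card ((Matrix (Fin r) (Fin r) F)ˣ) := by
    intro A
    obtain ⟨B₀, S₀, hB₀, hS₀s, hS₀u, hdec⟩ := exists_decomp A.2.1 A.2.2
    obtain ⟨L₀, hL₀⟩ := exists_left_inverse hB₀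
    have hB₀tL₀t : B₀ᵀ * L₀ᵀ = 1 := by rw [← transpose_mul, hL₀, transpose_one]
    have hcancel : ∀ X Y : Matrix (Fin r) (Fin r) F,
        B₀ * X * B₀ᵀ = B₀ * Y * B₀ᵀ → X = Y := by
      intro X Y h
      have h2 := congrArg (fun Z => L₀ * Z * L₀ᵀ) h
      have h3 : ∀ X : Matrix (Fin r) (Fin r) F,
          L₀ * (B₀ * X * B₀ᵀ) * L₀ᵀ = X := by
        intro X
        calc L₀ * (B₀ * X * B₀ᵀ) * L₀ᵀ = (L₀ * B₀) * X * (B₀ᵀ * L₀ᵀ) := by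
              simp only [Matrix.mul_assoc]
          _ = X := by rw [hL₀, hB₀tL₀t, Matrix.one_mul, Matrix.mul_one]
      rwa [h3 X, h3 Y] at h2
    let f : (Matrix (Fin r) (Fin r) F)ˣ → {p : Pt // φ p = A} := fun G =>
      ⟨⟨(B₀ * (G : Matrix (Fin r) (Fin r) F),
          ((G⁻¹ : (Matrix (Fin r) (Fin r) F)ˣ) : Matrix (Fin r) (Fin r) F) * S₀ *
            ((G⁻¹ : (Matrix (Fin r) (Fin r) F)ˣ) : Matrix (Fin r) (Fin r) F)ᵀ),
        by
          constructor
          · rw [Matrix.rank_mul_eq_left_of_isUnit_det _ _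
              ((Matrix.isUnit_iff_isUnit_det _).mp G.isUnit)]
            exact hB₀
          constructor
          · rw [Matrix.IsSymm, transpose_mul, transpose_mul, transpose_transpose,
              hS₀s.eq, Matrix.mul_assoc]
          · exact (G⁻¹.isUnit.mul hS₀u).mul (isUnit_transpose G⁻¹.isUnit)⟩,
        Subtype.ext ((conj_outer B₀ S₀ _ _ G.mul_inv).trans hdec)⟩
    have hinj : Function.Injective f := by
      intro G G' h
      have h1 : B₀ * (G : Matrix (Fin r) (Fin r) F) = B₀ * (G' : Matrix (Fin r) (Fin r) F) := by
        have := congrArg (fun p => p.1.1.1) h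
        exact this
      have h2 := congrArg (fun Z => L₀ * Z) h1
      simp only [← Matrix.mul_assoc, hL₀, Matrix.one_mul] at h2
      exact Units.ext h2
    have hsurj : Function.Surjective f := by
      rintro ⟨⟨⟨B, S⟩, hBr, hSs, hSu⟩, hφ⟩
      have hφ' : B * S * Bᵀ = A.1 := congrArg Subtype.val hφ
      have hrange : LinearMap.range B.mulVecLin = LinearMap.range B₀.mulVecLin := by
        have r1 := range_BSBt hBr hSu
        have r2 := range_BSBt hB₀ hS₀u
        rw [hφ'] at r1
        rw [hdec] at r2
        rw [← r1, ← r2]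
      obtain ⟨M, hM⟩ := exists_factor (B := B₀) (A := B) (fun j => by
        rw [← hrange]
        refine ⟨Pi.single j 1, ?_⟩
        rw [Matrix.mulVecLin_apply, Matrix.mulVec_single]
        funext i
        simp [Matrix.col])
      have hMrank : M.rank = r := by
        have hle : M.rank ≤ r := by
          have := Matrix.rank_le_card_height M
          simpa using this
        have hge : r ≤ M.rank := by
          calc r = B.rank := hBr.symm
            _ = (B₀ * M).rank := by rw [hM]
            _ ≤ M.rank := Matrix.rank_mul_le_right _ _
        omega
      have hMu : IsUnit M := isUnit_of_rank_eq hMrank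
      refine ⟨hMu.unit, ?_⟩
      have hGcoe : (hMu.unit : Matrix (Fin r) (Fin r) F) = M := hMu.unit_spec
      have hS₀eq : M * S * Mᵀ = S₀ := by
        apply hcancel
        have e1 : B₀ * (M * S * Mᵀ) * B₀ᵀ = B * S * Bᵀ := by
          calc B₀ * (M * S * Mᵀ) * B₀ᵀ = (B₀ * M) * S * (B₀ * M)ᵀ := by
                rw [transpose_mul]
                simp only [Matrix.mul_assoc]
            _ = B * S * Bᵀ := by rw [hM]
        rw [e1, hφ', hdec]
      apply Subtype.ext
      apply Subtype.ext
      show (B₀ * (hMu.unit : Matrix (Fin r) (Fin r) F),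
        ((hMu.unit⁻¹ : (Matrix (Fin r) (Fin r) F)ˣ) : Matrix (Fin r) (Fin r) F) * S₀ *
          ((hMu.unit⁻¹ : (Matrix (Fin r) (Fin r) F)ˣ) : Matrix (Fin r) (Fin r) F)ᵀ) = (B, S)
      rw [hGcoe, hM]
      have hSeq : ((hMu.unit⁻¹ : (Matrix (Fin r) (Fin r) F)ˣ) : Matrix (Fin r) (Fin r) F) * S₀ *
          ((hMu.unit⁻¹ : (Matrix (Fin r) (Fin r) F)ˣ) : Matrix (Fin r) (Fin r) F)ᵀ = S := by
        rw [← hS₀eq]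
        have := conj_conj (F := F) hMu.unit S
        rw [hGcoe] at this
        exact this
      rw [hSeq]
    exact (Nat.card_congr (Equiv.ofBijective f ⟨hinj, hsurj⟩)).symm
  have hsum : Nat.card Pt = ∑ A : T, Nat.card {p : Pt // φ p = A} := by
    rw [← Nat.card_congr (Equiv.sigmaFiberEquiv φ)]
    exact nat_card_sigma _
  rw [← hPtcard, hsum]
  symm
  calc (∑ A : T, Nat.card {p : Pt // φ p = A})
      = ∑ _A : T, Nat.card ((Matrix (Fin r) (Fin r) F)ˣ) :=
        Finset.sum_congr rfl fun A _ => hfib A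
    _ = Fintype.card T * Nat.card ((Matrix (Fin r) (Fin r) F)ˣ) := by
        rw [Finset.sum_const, Finset.card_univ, smul_eq_mul]
    _ = Nat.card T * Nat.card ((Matrix (Fin r) (Fin r) F)ˣ) := by
        simp [Nat.card_eq_fintype_card]

end MainOrbit
section Final

lemma sum_Icc_two_mul (s : ℕ) : ∑ i ∈ Finset.Icc 1 s, 2 * i = s * (s + 1) := by
  induction s with
  | zero => rfl
  | succ t ih =>
    rw [Finset.sum_Icc_succ_top (by omega : 1 ≤ t + 1), ih]
    ring

lemma prod_parity_split (g : ℕ → ℚ) (s : ℕ) :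
    ∏ j ∈ Finset.range (2*s+1), g (j+1) =
      (∏ i ∈ Finset.range (s+1), g (2*i+1)) * ∏ i ∈ Finset.Icc 1 s, g (2*i) := by
  induction s with
  | zero => simp
  | succ t ih =>
    have h1 : 2*(t+1)+1 = (2*t+1) + 1 + 1 := by omega
    rw [h1, Finset.prod_range_succ, Finset.prod_range_succ, ih,
      Finset.prod_range_succ (f := fun i => g (2*i+1)) (n := t+1),
      Finset.prod_Icc_succ_top (by omega : 1 ≤ t + 1)]
    have e1 : 2*(t+1) = 2*t+1+1 := by omega
    rw [e1]
    ring

end Final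

end CountSymm

open CountSymm in
/-- **Counting symmetric matrices of odd rank over a finite field.** Let `F` be a
finite field of odd cardinality `q`. The number of symmetric `n×n` matrices over `F`
of rank `r = 2s+1` (with `2s+1 ≤ n`) equals
`∏_{i=1}^{s} q^{2i}/(q^{2i}−1) · ∏_{i=0}^{2s} (q^{n−i} − 1)`. -/
theorem card_symmetric_matrices_odd_rank
    (F : Type) [Field F] [Fintype F] (hq : Odd (Fintype.card F))
    (n s : ℕ) (hs : 2 * s + 1 ≤ n) :
    (Nat.card {A : Matrix (Fin n) (Fin n) F // A.IsSymm ∧ A.rank = 2 * s + 1} : ℚ) =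
      (∏ i ∈ Finset.Icc 1 s,
        ((Fintype.card F : ℚ) ^ (2 * i)) / ((Fintype.card F : ℚ) ^ (2 * i) - 1)) *
      ∏ i ∈ Finset.range (2 * s + 1), ((Fintype.card F : ℚ) ^ (n - i) - 1) := by
  classical
  set r : ℕ := 2 * s + 1 with hr
  set q : ℕ := Fintype.card F with hqdef
  set Q : ℚ := (q : ℚ) with hQdef
  have hq2 : 2 ≤ q := Fintype.one_lt_card
  have hQ1 : (1 : ℚ) < Q := by
    rw [hQdef]
    exact_mod_cast hq2
  have hQ0 : Q ≠ 0 := (lt_trans zero_lt_one hQ1).ne'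
  have hfac : ∀ k : ℕ, k ≠ 0 → Q ^ k - 1 ≠ 0 := by
    intro k hk
    have : (1 : ℚ) < Q ^ k := one_lt_pow₀ hQ1 hk
    exact sub_ne_zero.mpr (ne_of_gt this)
  -- main counting identity
  have hmain := card_main (F := F) (n := n) (r := r) hs
  have hGL : Nat.card ((Matrix (Fin r) (Fin r) F)ˣ) = ∏ i : Fin r, (q ^ r - q ^ (i : ℕ)) :=
    Matrix.card_GL_field r
  have hIcl := Icount_closed (F := F) r
  -- cast to ℚ
  have hcast : (Nat.card {A : Matrix (Fin n) (Fin n) F // A.IsSymm ∧ A.rank = r} : ℚ) *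
      ((∏ i : Fin r, (q ^ r - q ^ (i : ℕ)) : ℕ) : ℚ)
      = ((∏ i : Fin r, (q ^ n - q ^ (i : ℕ)) : ℕ) : ℚ) * ((fclosed F r : ℕ) : ℚ) := by
    rw [← Nat.cast_mul, ← Nat.cast_mul, ← hGL, ← hIcl, hmain]
  -- prod casts
  have hprodcast : ∀ m : ℕ, r ≤ m →
      ((∏ i : Fin r, (q ^ m - q ^ (i : ℕ)) : ℕ) : ℚ)
        = Q ^ (∑ i ∈ Finset.range r, i) * ∏ i ∈ Finset.range r, (Q ^ (m - i) - 1) := by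
    intro m hm
    rw [Nat.cast_prod, Fin.prod_univ_eq_prod_range (fun i => ((q ^ m - q ^ i : ℕ) : ℚ)),
      ← Finset.prod_pow_eq_pow_sum, ← Finset.prod_mul_distrib]
    refine Finset.prod_congr rfl fun i hi => ?_
    have hi' : i < r := Finset.mem_range.mp hi
    have hle : q ^ i ≤ q ^ m := Nat.pow_le_pow_right (by omega) (by omega)
    rw [Nat.cast_sub hle, Nat.cast_pow, Nat.cast_pow, mul_sub, mul_one, ← pow_add]
    congr 2
    omega
  have hfcast : ((fclosed F r : ℕ) : ℚ)
      = Q ^ (s * (s + 1)) * ∏ i ∈ Finset.range (s+1), (Q ^ (2*i+1) - 1) := by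
    rw [fclosed_cast]
    have d1 : r / 2 = s := by omega
    have d2 : (r + 1) / 2 = s + 1 := by omega
    rw [d1, d2]
  -- reflect for the GL side
  have hreflect : ∏ i ∈ Finset.range r, (Q ^ (r - i) - 1)
      = ∏ j ∈ Finset.range r, (Q ^ (j + 1) - 1) := by
    have h := Finset.prod_range_reflect (fun j => Q ^ (j + 1) - 1) r
    rw [← h]
    refine Finset.prod_congr rfl fun i hi => ?_
    have hi' : i < r := Finset.mem_range.mp hi
    congr 2
    omega
  have hsplit : ∏ j ∈ Finset.range r, (Q ^ (j + 1) - 1)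
      = (∏ i ∈ Finset.range (s+1), (Q ^ (2*i+1) - 1)) * ∏ i ∈ Finset.Icc 1 s, (Q ^ (2*i) - 1) :=
    prod_parity_split (fun k => Q ^ k - 1) s
  -- first factor of the target
  have hfirst : (∏ i ∈ Finset.Icc 1 s, (Q ^ (2 * i)) / (Q ^ (2 * i) - 1))
      = Q ^ (s * (s + 1)) / ∏ i ∈ Finset.Icc 1 s, (Q ^ (2*i) - 1) := by
    rw [Finset.prod_div_distrib, Finset.prod_pow_eq_pow_sum, sum_Icc_two_mul]
  -- nonvanishing
  have hP' : (∏ i ∈ Finset.range (s+1), (Q ^ (2*i+1) - 1)) ≠ 0 :=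
    Finset.prod_ne_zero_iff.mpr fun i _ => hfac _ (by omega)
  have hD : (∏ i ∈ Finset.Icc 1 s, (Q ^ (2*i) - 1)) ≠ 0 :=
    Finset.prod_ne_zero_iff.mpr fun i hi => hfac _ (by
      have := Finset.mem_Icc.mp hi
      omega)
  have hQe : Q ^ (∑ i ∈ Finset.range r, i) ≠ 0 := pow_ne_zero _ hQ0
  -- finish
  rw [hprodcast r le_rfl, hprodcast n hs, hreflect, hsplit, hfcast] at hcast
  rw [hfirst]
  apply mul_right_cancel₀ (b := Q ^ (∑ i ∈ Finset.range r, i) *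
    ((∏ i ∈ Finset.range (s+1), (Q ^ (2*i+1) - 1)) * ∏ i ∈ Finset.Icc 1 s, (Q ^ (2*i) - 1)))
    (mul_ne_zero hQe (mul_ne_zero hP' hD))
  rw [hcast]
  field_simp
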